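/- Let R̄ be a braid-equation operator on W⊗W with R̄₁₃ := R̄₁₂R̄₂₃R̄₁₂ = R̄₂₃R̄₁₂R̄₂₃. If x ∈ W^{⊗3} satisfies R̄₁₃x = λx, (R̄₂₃R̄₁₂ − R̄₂₃ + 1)x = 0 and (R̄₁₂R̄₂₃ − R̄₁₂ + 1)x = 0, then (λ+1)x satisfies R̄₁₃x = −x; i.e., λ = −1 or x = 0. -/
import Mathlib


open TensorProduct

variable {k : Type*} [Field k] {W : Type*} [AddCommGroup W] [Module k W]

/-- The operator `R̄ ⊗ id` acting on `W ⊗ W ⊗ W` (associated as `W ⊗ (W ⊗ W)`). -/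
noncomputable def R₁₂ (R : Module.End k (W ⊗[k] W)) :
    Module.End k (W ⊗[k] (W ⊗[k] W)) :=
  (TensorProduct.assoc k W W W).toLinearMap ∘ₗ
    TensorProduct.map R LinearMap.id ∘ₗ (TensorProduct.assoc k W W W).symm.toLinearMap

/-- The operator `id ⊗ R̄` acting on `W ⊗ W ⊗ W`. -/
noncomputable def R₂₃ (R : Module.End k (W ⊗[k] W)) :
    Module.End k (W ⊗[k] (W ⊗[k] W)) :=
  TensorProduct.map LinearMap.id R

/-- The operator Φ of Lemma 3.2. -/
noncomputable def Phi (R : Module.End k (W ⊗[k] W)) :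
    Module.End k (W ⊗[k] (W ⊗[k] W)) :=
  R₁₂ R * R₂₃ R * R₁₂ R - R₁₂ R * R₂₃ R - R₂₃ R * R₁₂ R + R₁₂ R + R₂₃ R - 1

theorem stmt_9 (R : Module.End k (W ⊗[k] W)) (μ : k)
    (hbraid : R₁₂ R * R₂₃ R * R₁₂ R = R₂₃ R * R₁₂ R * R₂₃ R)
    (x : W ⊗[k] (W ⊗[k] W))
    (hx : (R₁₂ R * R₂₃ R * R₁₂ R) x = μ • x)
    (h1 : (R₂₃ R * R₁₂ R - R₂₃ R + 1) x = 0)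
    (h2 : (R₁₂ R * R₂₃ R - R₁₂ R + 1) x = 0) :
    μ = -1 ∨ x = 0 := by
  set A := R₁₂ R
  set B := R₂₃ R
  simp only [LinearMap.sub_apply, LinearMap.add_apply, Module.End.one_apply,
    Module.End.mul_apply] at h1 h2 hx hbraid
  have hAB : A (B x) = A x - x := by linear_combination (norm := module) h2
  have hBA : B (A x) = B x - x := by linear_combination (norm := module) h1
  have hBAB : B (A (B x)) = -x := by rw [hAB, map_sub, hBA]; abel
  have : μ • x = -x := by
    rw [← hx, hBA, map_sub, hAB]; abel
  have h : (μ + 1) • x = 0 := by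
    rw [add_smul, one_smul, this]; abel
  rcases smul_eq_zero.mp h with h | h
  · left; linear_combination h
  · right; exact h
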